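/- arXiv:2306.15085 — 9 statements merged into one kernel-verified Lean document; each statement's English description precedes it below -/
import Mathlib

section
/- Let f be a polymatroid on a finite set E and let X, Y, U ⊆ E satisfy f(U ∪ X) = f(X) and f(U ∪ Y) = f(Y). Then f(U) ≤ f(X) + f(Y) − f(X ∪ Y). -/
open Finset

/-- A polymatroid on a finite ground set `E`: a real-valued function on the subsets of `E`
with `f ∅ = 0`, monotone and submodular. -/
def IsPolymatroid {α : Type*} [DecidableEq α] (E : Finset α) (f : Finset α → ℝ) : Prop :=
  f ∅ = 0 ∧
  (∀ ⦃X Y : Finset α⦄, X ⊆ Y → Y ⊆ E → f X ≤ f Y) ∧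
  (∀ ⦃X Y : Finset α⦄, X ⊆ E → Y ⊆ E → f (X ∪ Y) + f (X ∩ Y) ≤ f X + f Y)

/-- If `f(U ∪ X) = f(X)` and `f(U ∪ Y) = f(Y)`, then `f(U) ≤ f(X) + f(Y) − f(X ∪ Y)`. -/
theorem stmt_0 {α : Type*} [DecidableEq α] (E : Finset α) (f : Finset α → ℝ)
    (hf : IsPolymatroid E f) (X Y U : Finset α)
    (hXE : X ⊆ E) (hYE : Y ⊆ E) (hUE : U ⊆ E)
    (hUX : f (U ∪ X) = f X) (hUY : f (U ∪ Y) = f Y) :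
    f U ≤ f X + f Y - f (X ∪ Y) := by
  obtain ⟨-, hmono, hsub⟩ := hf
  have hUXE : U ∪ X ⊆ E := union_subset hUE hXE
  have hUYE : U ∪ Y ⊆ E := union_subset hUE hYE
  have h1 := hsub hUXE hUYE
  have h2 : f U ≤ f ((U ∪ X) ∩ (U ∪ Y)) :=
    hmono (subset_inter subset_union_left subset_union_left)
      ((inter_subset_left).trans hUXE)
  have h3 : f (X ∪ Y) ≤ f ((U ∪ X) ∪ (U ∪ Y)) := by
    apply hmono _ (union_subset hUXE hUYE)
    exact union_subset (subset_union_right.trans subset_union_left)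
      (subset_union_right.trans subset_union_right)
  rw [hUX, hUY] at h1
  linarith
end

section
/- Let f be a polymatroid on a finite set E and let X, Y, U ⊆ E satisfy f(U ∪ X) = f(X) and f(U ∪ Y) = f(Y). If Z ⊆ E is a common information for the pair (X, Y) in f, then f(U ∪ Z) = f(Z). -/
open Finset

/-- If `f(U ∪ X) = f(X)`, `f(U ∪ Y) = f(Y)` and `Z` is a common information for `(X, Y)`
in `f`, then `f(U ∪ Z) = f(Z)`. -/
theorem stmt_1 {α : Type*} [DecidableEq α] (E : Finset α) (f : Finset α → ℝ)
    (hf : IsPolymatroid E f) (X Y U Z : Finset α)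
    (hXE : X ⊆ E) (hYE : Y ⊆ E) (hUE : U ⊆ E) (hZE : Z ⊆ E)
    (hUX : f (U ∪ X) = f X) (hUY : f (U ∪ Y) = f Y)
    (hZX : f (Z ∪ X) = f X) (hZY : f (Z ∪ Y) = f Y)
    (hZmod : f (X ∪ Z) + f (Y ∪ Z) = f (X ∪ Y ∪ Z) + f Z) :
    f (U ∪ Z) = f Z := by
  obtain ⟨h0, hmono, hsub⟩ := hf
  have hXZ : f (X ∪ Z) = f X := by rw [union_comm]; exact hZX
  have hYZ : f (Y ∪ Z) = f Y := by rw [union_comm]; exact hZY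
  -- f(U ∪ X ∪ Z) = f(X ∪ Z)
  have hUXZ : f (U ∪ X ∪ Z) = f (X ∪ Z) := by
    have hs := hsub (show U ∪ X ⊆ E from union_subset hUE hXE)
      (show X ∪ Z ⊆ E from union_subset hXE hZE)
    have he : (U ∪ X) ∪ (X ∪ Z) = U ∪ X ∪ Z := by
      ext a; simp [or_assoc]
    have hXsub : X ⊆ (U ∪ X) ∩ (X ∪ Z) :=
      subset_inter subset_union_right subset_union_left
    have h1 : f X ≤ f ((U ∪ X) ∩ (X ∪ Z)) :=
      hmono hXsub (inter_subset_left.trans (union_subset hUE hXE))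
    have h2 : f (X ∪ Z) ≤ f (U ∪ X ∪ Z) :=
      hmono (by intro a ha; simp at ha ⊢; tauto)
        (union_subset (union_subset hUE hXE) hZE)
    rw [he, hUX] at hs
    linarith
  have hUYZ : f (U ∪ Y ∪ Z) = f (Y ∪ Z) := by
    have hs := hsub (show U ∪ Y ⊆ E from union_subset hUE hYE)
      (show Y ∪ Z ⊆ E from union_subset hYE hZE)
    have he : (U ∪ Y) ∪ (Y ∪ Z) = U ∪ Y ∪ Z := by
      ext a; simp [or_assoc]
    have hYsub : Y ⊆ (U ∪ Y) ∩ (Y ∪ Z) :=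
      subset_inter subset_union_right subset_union_left
    have h1 : f Y ≤ f ((U ∪ Y) ∩ (Y ∪ Z)) :=
      hmono hYsub (inter_subset_left.trans (union_subset hUE hYE))
    have h2 : f (Y ∪ Z) ≤ f (U ∪ Y ∪ Z) :=
      hmono (by intro a ha; simp at ha ⊢; tauto)
        (union_subset (union_subset hUE hYE) hZE)
    rw [he, hUY] at hs
    linarith
  -- main submodularity
  have hs := hsub (show U ∪ X ∪ Z ⊆ E from union_subset (union_subset hUE hXE) hZE)
    (show U ∪ Y ∪ Z ⊆ E from union_subset (union_subset hUE hYE) hZE)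
  have hUZint : U ∪ Z ⊆ (U ∪ X ∪ Z) ∩ (U ∪ Y ∪ Z) := by
    intro a ha; simp at ha ⊢; tauto
  have h1 : f (U ∪ Z) ≤ f ((U ∪ X ∪ Z) ∩ (U ∪ Y ∪ Z)) :=
    hmono hUZint (inter_subset_left.trans (union_subset (union_subset hUE hXE) hZE))
  have h2 : f (X ∪ Y ∪ Z) ≤ f ((U ∪ X ∪ Z) ∪ (U ∪ Y ∪ Z)) := by
    refine hmono (by intro a ha; simp at ha ⊢; tauto) ?_
    exact union_subset (union_subset (union_subset hUE hXE) hZE)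
      (union_subset (union_subset hUE hYE) hZE)
  have hle : f (U ∪ Z) ≤ f Z := by
    rw [hUXZ, hUYZ] at hs
    linarith
  have hge : f Z ≤ f (U ∪ Z) :=
    hmono subset_union_right (union_subset hUE hZE)
  linarith
end

section
/- Let f be a polymatroid on a finite set E, let Z be a finite set disjoint from E, and let g be a polymatroid on E ∪ Z extending f that is an AK extension of f for a pair (X, Y) of subsets of E. Then g is a CI extension for the pair (X, Y) (that is, g(Z ∪ X) = g(X), g(Z ∪ Y) = g(Y), and g(X ∪ Z) + g(Y ∪ Z) = g(X ∪ Y ∪ Z) + g(Z)) if and only if g(Z ∪ Y) = g(Y). -/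
open Finset

/-- Ahlswede–Körner extension condition for the pair `(X, Y)`. -/
def IsAKExtension {α : Type*} [DecidableEq α] (Z : Finset α) (g : Finset α → ℝ)
    (X Y : Finset α) : Prop :=
  g (Z ∪ X) = g X ∧ ∀ X' ⊆ X, g (X' ∪ Z) - g Z = g (X' ∪ Y) - g Y

/-- An AK extension `g` for `(X, Y)` is a CI extension for `(X, Y)`
if and only if `g(Z ∪ Y) = g(Y)`. -/
theorem stmt_3 {α : Type*} [DecidableEq α] (E Z : Finset α) (hdisj : Disjoint E Z)
    (f g : Finset α → ℝ) (hf : IsPolymatroid E f) (hg : IsPolymatroid (E ∪ Z) g)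
    (hext : ∀ X ⊆ E, g X = f X)
    (X Y : Finset α) (hXE : X ⊆ E) (hYE : Y ⊆ E)
    (hAK : IsAKExtension Z g X Y) :
    (g (Z ∪ X) = g X ∧ g (Z ∪ Y) = g Y ∧
      g (X ∪ Z) + g (Y ∪ Z) = g (X ∪ Y ∪ Z) + g Z) ↔ g (Z ∪ Y) = g Y := by

  obtain ⟨hg0, hgmono, hgsub⟩ := hg
  obtain ⟨hAK1, hAK2⟩ := hAK
  constructor
  · rintro ⟨_, h, _⟩; exact h
  · intro h
    refine ⟨hAK1, h, ?_⟩
    have hYZ : g (Y ∪ Z) = g Y := by rwa [union_comm]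
    have hXYE : X ∪ Y ⊆ E ∪ Z := (union_subset hXE hYE).trans subset_union_left
    have hYZE : Y ∪ Z ⊆ E ∪ Z := union_subset_union_left hYE
    have hint : (X ∪ Y) ∩ (Y ∪ Z) = Y := by
      ext a
      simp only [mem_inter, mem_union]
      constructor
      · rintro ⟨hx | hy, hy' | hz⟩
        · exact hy'
        · exact absurd hz (Finset.disjoint_left.mp hdisj (hXE hx))
        · exact hy
        · exact hy
      · exact fun ha => ⟨Or.inr ha, Or.inl ha⟩
    have hun : (X ∪ Y) ∪ (Y ∪ Z) = X ∪ Y ∪ Z := by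
      ext a; simp only [mem_union]; tauto
    have hsub := hgsub hXYE hYZE
    rw [hint, hun] at hsub
    have hmono : g (X ∪ Y) ≤ g (X ∪ Y ∪ Z) :=
      hgmono subset_union_left (union_subset hXYE (subset_union_right))
    have key : g (X ∪ Y ∪ Z) = g (X ∪ Y) := by linarith
    have hX := hAK2 X (subset_refl X)
    linarith
end

section
/- Let f be a polymatroid on a finite set E and let L₀, L₁, L₂ ⊆ E satisfy f(Lᵢ) = 2 for each i, f(Lᵢ ∪ Lⱼ) = 3 whenever i ≠ j, and f(L₀ ∪ L₁ ∪ L₂) = 4. Let z ∉ E and let g be a polymatroid on E ∪ {z} extending f that is an AK extension of f (with Z = {z}) for the pair (L₁ ∪ L₂, L₀). Then g({z} ∪ Lᵢ) = g(Lᵢ) for each i = 0, 1, 2. -/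
open Finset

/-- If `f(Lᵢ) = 2`, `f(Lᵢ ∪ Lⱼ) = 3` for `i ≠ j`, `f(L₀ ∪ L₁ ∪ L₂) = 4`, and `g` is a
single-element AK extension of `f` for the pair `(L₁ ∪ L₂, L₀)`, then
`g({z} ∪ Lᵢ) = g(Lᵢ)` for `i = 0, 1, 2`. -/
theorem stmt_4 {α : Type*} [DecidableEq α] (E : Finset α) (f : Finset α → ℝ)
    (hf : IsPolymatroid E f)
    (L₀ L₁ L₂ : Finset α) (hL₀ : L₀ ⊆ E) (hL₁ : L₁ ⊆ E) (hL₂ : L₂ ⊆ E)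
    (hr0 : f L₀ = 2) (hr1 : f L₁ = 2) (hr2 : f L₂ = 2)
    (hr01 : f (L₀ ∪ L₁) = 3) (hr02 : f (L₀ ∪ L₂) = 3) (hr12 : f (L₁ ∪ L₂) = 3)
    (hr012 : f (L₀ ∪ L₁ ∪ L₂) = 4)
    (z : α) (hz : z ∉ E)
    (g : Finset α → ℝ) (hg : IsPolymatroid (E ∪ {z}) g)
    (hext : ∀ X ⊆ E, g X = f X)
    (hAK : IsAKExtension {z} g (L₁ ∪ L₂) L₀) :
    g ({z} ∪ L₀) = g L₀ ∧ g ({z} ∪ L₁) = g L₁ ∧ g ({z} ∪ L₂) = g L₂ := by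
  obtain ⟨hf0, hfm, hfs⟩ := hf
  obtain ⟨hg0, hgm, hgs⟩ := hg
  obtain ⟨hAK1, hAK2⟩ := hAK
  -- g values on sets inside E
  have gL0 : g L₀ = 2 := by rw [hext L₀ hL₀, hr0]
  have gL1 : g L₁ = 2 := by rw [hext L₁ hL₁, hr1]
  have gL2 : g L₂ = 2 := by rw [hext L₂ hL₂, hr2]
  have gL12 : g (L₁ ∪ L₂) = 3 := by rw [hext _ (union_subset hL₁ hL₂), hr12]
  have gL01 : g (L₀ ∪ L₁) = 3 := by rw [hext _ (union_subset hL₀ hL₁), hr01]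
  have gL02 : g (L₀ ∪ L₂) = 3 := by rw [hext _ (union_subset hL₀ hL₂), hr02]
  have gL10 : g (L₁ ∪ L₀) = 3 := by rw [union_comm]; exact gL01
  have gL20 : g (L₂ ∪ L₀) = 3 := by rw [union_comm]; exact gL02
  have gL012 : g (L₀ ∪ L₁ ∪ L₂) = 4 := by
    rw [hext _ (union_subset (union_subset hL₀ hL₁) hL₂), hr012]
  have gL120 : g (L₁ ∪ L₂ ∪ L₀) = 4 := by
    rw [show L₁ ∪ L₂ ∪ L₀ = L₀ ∪ L₁ ∪ L₂ by
      ext x; simp only [mem_union]; tauto]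
    exact gL012
  -- compute g {z} and g (Lᵢ ∪ {z}) for i = 1, 2
  have hz12 := hAK2 (L₁ ∪ L₂) Subset.rfl
  have hz1 := hAK2 L₁ subset_union_left
  have hz2 := hAK2 L₂ subset_union_right
  have hAK1' : g (L₁ ∪ L₂ ∪ {z}) = 3 := by
    rw [union_comm (L₁ ∪ L₂) ({z} : Finset α), hAK1, gL12]
  have gz : g ({z} : Finset α) = 1 := by
    rw [hAK1', gL120, gL0] at hz12; linarith
  have gz1 : g (L₁ ∪ {z}) = 2 := by rw [gz, gL10, gL0] at hz1; linarith
  have gz2 : g (L₂ ∪ {z}) = 2 := by rw [gz, gL20, gL0] at hz2; linarith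
  -- subset facts
  have hE : E ⊆ E ∪ {z} := subset_union_left
  have hzE : ({z} : Finset α) ⊆ E ∪ {z} := subset_union_right
  -- g (L₀ ∪ L₁ ∪ {z}) ≤ 3
  have hA : g (L₀ ∪ L₁ ∪ {z}) ≤ 3 := by
    have h1 : L₀ ∪ L₁ ⊆ E ∪ {z} := (union_subset hL₀ hL₁).trans hE
    have h2 : L₁ ∪ {z} ⊆ E ∪ {z} := union_subset (hL₁.trans hE) hzE
    have hsub := hgs h1 h2
    have he : (L₀ ∪ L₁) ∪ (L₁ ∪ {z}) = L₀ ∪ L₁ ∪ {z} := by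
      ext x; simp only [mem_union]; tauto
    rw [he] at hsub
    have hmono : g L₁ ≤ g ((L₀ ∪ L₁) ∩ (L₁ ∪ {z})) :=
      hgm (subset_inter subset_union_right subset_union_left)
        (inter_subset_left.trans h1)
    linarith [hsub, hmono, gL1, gz1, gL01]
  have hB : g (L₀ ∪ L₂ ∪ {z}) ≤ 3 := by
    have h1 : L₀ ∪ L₂ ⊆ E ∪ {z} := (union_subset hL₀ hL₂).trans hE
    have h2 : L₂ ∪ {z} ⊆ E ∪ {z} := union_subset (hL₂.trans hE) hzE
    have hsub := hgs h1 h2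
    have he : (L₀ ∪ L₂) ∪ (L₂ ∪ {z}) = L₀ ∪ L₂ ∪ {z} := by
      ext x; simp only [mem_union]; tauto
    rw [he] at hsub
    have hmono : g L₂ ≤ g ((L₀ ∪ L₂) ∩ (L₂ ∪ {z})) :=
      hgm (subset_inter subset_union_right subset_union_left)
        (inter_subset_left.trans h1)
    linarith [hsub, hmono, gL2, gz2, gL02]
  -- main submodularity step
  have h1 : L₀ ∪ L₁ ∪ {z} ⊆ E ∪ {z} :=
    union_subset ((union_subset hL₀ hL₁).trans hE) hzE
  have h2 : L₀ ∪ L₂ ∪ {z} ⊆ E ∪ {z} :=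
    union_subset ((union_subset hL₀ hL₂).trans hE) hzE
  have hsub := hgs h1 h2
  have hU : g (L₀ ∪ L₁ ∪ L₂) ≤ g ((L₀ ∪ L₁ ∪ {z}) ∪ (L₀ ∪ L₂ ∪ {z})) := by
    refine hgm ?_ (union_subset h1 h2)
    intro x hx; simp only [mem_union] at hx ⊢; tauto
  have hI : g (L₀ ∪ {z}) ≤ g ((L₀ ∪ L₁ ∪ {z}) ∩ (L₀ ∪ L₂ ∪ {z})) := by
    refine hgm ?_ (inter_subset_left.trans h1)
    refine subset_inter ?_ ?_ <;>
      (intro x hx; simp only [mem_union] at hx ⊢; tauto)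
  have hI2 : g (L₀ ∪ {z}) ≤ 2 := by linarith [hsub, hU, hI, gL012]
  have hlow : g L₀ ≤ g (L₀ ∪ {z}) :=
    hgm subset_union_left (union_subset (hL₀.trans hE) hzE)
  have hmain : g (L₀ ∪ {z}) = 2 := le_antisymm hI2 (by rw [← gL0] at *; linarith)
  refine ⟨?_, ?_, ?_⟩
  · rw [union_comm, hmain, gL0]
  · rw [union_comm, gz1, gL1]
  · rw [union_comm, gz2, gL2]
end

section
/- Let f be a polymatroid on a finite set E, let U ⊆ E and X, Y ⊆ E ∖ U, let Z be a finite set disjoint from E, and let g be a polymatroid on E ∪ Z extending f that is a CI extension of f for the pair (X ∪ U, Y ∪ U). Define h on subsets of (E ∪ Z) ∖ U by h(S) = g(S ∪ U) − g(U). Then h is a polymatroid on (E ∪ Z) ∖ U extending the contraction of f by U (i.e., h(S) = f(S ∪ U) − f(U) for S ⊆ E ∖ U), and h is a CI extension for the pair (X, Y): h(Z ∪ X) = h(X), h(Z ∪ Y) = h(Y), and h(X ∪ Z) + h(Y ∪ Z) = h(X ∪ Y ∪ Z) + h(Z). -/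
open Finset

/-- Common information extension condition for the pair `(X, Y)`:
`g(Z ∪ X) = g(X)`, `g(Z ∪ Y) = g(Y)` and `g(X ∪ Z) + g(Y ∪ Z) = g(X ∪ Y ∪ Z) + g(Z)`. -/
def IsCIExtension {α : Type*} [DecidableEq α] (Z : Finset α) (g : Finset α → ℝ)
    (X Y : Finset α) : Prop :=
  g (Z ∪ X) = g X ∧ g (Z ∪ Y) = g Y ∧
    g (X ∪ Z) + g (Y ∪ Z) = g (X ∪ Y ∪ Z) + g Z

/-- The common information property is preserved by contraction: if `g` is a CI extension
of `f` for the pair `(X ∪ U, Y ∪ U)`, then the contraction `h(S) = g(S ∪ U) − g(U)`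
is a polymatroid extending the contraction of `f` by `U`, and it is a CI extension
for the pair `(X, Y)`. -/
theorem stmt_5 {α : Type*} [DecidableEq α] (E Z U : Finset α)
    (hUE : U ⊆ E) (hdisj : Disjoint E Z)
    (X Y : Finset α) (hXE : X ⊆ E \ U) (hYE : Y ⊆ E \ U)
    (f g : Finset α → ℝ) (hf : IsPolymatroid E f) (hg : IsPolymatroid (E ∪ Z) g)
    (hext : ∀ S ⊆ E, g S = f S)
    (hCI : IsCIExtension Z g (X ∪ U) (Y ∪ U))
    (h : Finset α → ℝ) (hh : ∀ S, h S = g (S ∪ U) - g U) :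
    IsPolymatroid ((E ∪ Z) \ U) h ∧
    (∀ S ⊆ E \ U, h S = f (S ∪ U) - f U) ∧
    IsCIExtension Z h X Y := by
  obtain ⟨hg0, hgmono, hgsub⟩ := hg
  obtain ⟨hc1, hc2, hc3⟩ := hCI
  have hXE' : X ⊆ E := hXE.trans (sdiff_subset)
  have hYE' : Y ⊆ E := hYE.trans (sdiff_subset)
  have hZEZ : Z ⊆ E ∪ Z := subset_union_right
  have hXUE : X ∪ U ⊆ E := union_subset hXE' hUE
  have hYUE : Y ∪ U ⊆ E := union_subset hYE' hUE
  have key : g (Z ∪ U) = g Z := by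
    have hsub : g ((Z ∪ (X ∪ U)) ∪ (Z ∪ (Y ∪ U))) + g ((Z ∪ (X ∪ U)) ∩ (Z ∪ (Y ∪ U)))
        ≤ g (Z ∪ (X ∪ U)) + g (Z ∪ (Y ∪ U)) :=
      hgsub (union_subset hZEZ (hXUE.trans subset_union_left))
        (union_subset hZEZ (hYUE.trans subset_union_left))
    rw [hc1, hc2] at hsub
    have e1 : (Z ∪ (X ∪ U)) ∪ (Z ∪ (Y ∪ U)) = (X ∪ U) ∪ (Y ∪ U) ∪ Z := by
      ext a; simp; tauto
    have e2 : (Z ∪ (X ∪ U)) ∩ (Z ∪ (Y ∪ U)) = Z ∪ ((X ∩ Y) ∪ U) := by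
      ext a; simp; tauto
    rw [e1, e2] at hsub
    have e3 : (X ∪ U) ∪ Z = Z ∪ (X ∪ U) := union_comm _ _
    have e4 : (Y ∪ U) ∪ Z = Z ∪ (Y ∪ U) := union_comm _ _
    rw [e3, e4, hc1, hc2] at hc3
    -- hc3 : g (X∪U) + g (Y∪U) = g ((X∪U)∪(Y∪U)∪Z) + g Z
    have h1 : g (Z ∪ ((X ∩ Y) ∪ U)) ≤ g Z := by linarith
    have h2 : g Z ≤ g (Z ∪ U) :=
      hgmono subset_union_left (union_subset hZEZ (hUE.trans subset_union_left))
    have h3 : g (Z ∪ U) ≤ g (Z ∪ ((X ∩ Y) ∪ U)) := by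
      apply hgmono
      · exact union_subset_union_right subset_union_right
      · exact union_subset hZEZ
          (((union_subset ((inter_subset_left).trans hXE') hUE)).trans subset_union_left)
    linarith
  refine ⟨⟨?_, ?_, ?_⟩, ?_, ?_, ?_, ?_⟩
  · rw [hh, empty_union, sub_self]
  · intro S T hST hTE
    rw [hh, hh]
    have hTU : T ∪ U ⊆ E ∪ Z :=
      union_subset (hTE.trans sdiff_subset) (hUE.trans subset_union_left)
    exact sub_le_sub_right (hgmono (union_subset_union_left hST) hTU) _
  · intro S T hSE hTE
    rw [hh, hh, hh, hh]
    have hSU : S ∪ U ⊆ E ∪ Z :=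
      union_subset (hSE.trans sdiff_subset) (hUE.trans subset_union_left)
    have hTU : T ∪ U ⊆ E ∪ Z :=
      union_subset (hTE.trans sdiff_subset) (hUE.trans subset_union_left)
    have := hgsub hSU hTU
    have e1 : (S ∪ U) ∪ (T ∪ U) = (S ∪ T) ∪ U := by ext a; simp; tauto
    have e2 : (S ∪ U) ∩ (T ∪ U) = (S ∩ T) ∪ U := by ext a; simp; tauto
    rw [e1, e2] at this
    linarith
  · intro S hSE
    rw [hh, hext _ (union_subset (hSE.trans sdiff_subset) hUE), hext _ hUE]
  · rw [hh, hh]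
    have e : (Z ∪ X) ∪ U = Z ∪ (X ∪ U) := union_assoc _ _ _
    rw [e, hc1]
  · rw [hh, hh]
    have e : (Z ∪ Y) ∪ U = Z ∪ (Y ∪ U) := union_assoc _ _ _
    rw [e, hc2]
  · rw [hh, hh, hh, hh]
    have e1 : (X ∪ Z) ∪ U = (X ∪ U) ∪ Z := by ext a; simp; tauto
    have e2 : (Y ∪ Z) ∪ U = (Y ∪ U) ∪ Z := by ext a; simp; tauto
    have e3 : (X ∪ Y ∪ Z) ∪ U = (X ∪ U) ∪ (Y ∪ U) ∪ Z := by ext a; simp; tauto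
    rw [e1, e2, e3, key]
    linarith
end

section
/- Let f be a polymatroid on a finite set E, let U ⊆ E and X, Y ⊆ E ∖ U, let Z be a finite set disjoint from E, and let g be a polymatroid on E ∪ Z extending f that is an AK extension of f for the pair (X ∪ U, Y ∪ U). Define h on subsets of (E ∪ Z) ∖ U by h(S) = g(S ∪ U) − g(U). Then h is a polymatroid on (E ∪ Z) ∖ U extending the contraction of f by U (i.e., h(S) = f(S ∪ U) − f(U) for S ⊆ E ∖ U), and h is an AK extension for the pair (X, Y): h(Z ∪ X) = h(X) and h(X′ ∪ Z) − h(Z) = h(X′ ∪ Y) − h(Y) for every X′ ⊆ X. -/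
open Finset

/-- The Ahlswede–Körner property is preserved by contraction: if `g` is an AK extension
of `f` for the pair `(X ∪ U, Y ∪ U)`, then the contraction `h(S) = g(S ∪ U) − g(U)`
is a polymatroid extending the contraction of `f` by `U`, and it is an AK extension
for the pair `(X, Y)`. -/
theorem stmt_6 {α : Type*} [DecidableEq α] (E Z U : Finset α)
    (hUE : U ⊆ E) (hdisj : Disjoint E Z)
    (X Y : Finset α) (hXE : X ⊆ E \ U) (hYE : Y ⊆ E \ U)
    (f g : Finset α → ℝ) (hf : IsPolymatroid E f) (hg : IsPolymatroid (E ∪ Z) g)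
    (hext : ∀ S ⊆ E, g S = f S)
    (hAK : IsAKExtension Z g (X ∪ U) (Y ∪ U))
    (h : Finset α → ℝ) (hh : ∀ S, h S = g (S ∪ U) - g U) :
    IsPolymatroid ((E ∪ Z) \ U) h ∧
    (∀ S ⊆ E \ U, h S = f (S ∪ U) - f U) ∧
    IsAKExtension Z h X Y := by

  obtain ⟨hg0, hgmono, hgsub⟩ := hg
  obtain ⟨hAK1, hAK2⟩ := hAK
  have hUEZ : U ⊆ E ∪ Z := hUE.trans subset_union_left
  -- g (Z ∪ U) = g Z
  have hZU : g (U ∪ Z) = g Z := by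
    have := hAK2 U subset_union_right
    have hYU : U ∪ (Y ∪ U) = Y ∪ U := by
      ext a; simp; tauto
    rw [hYU] at this
    linarith
  refine ⟨⟨?_, ?_, ?_⟩, ?_, ?_, ?_⟩
  · rw [hh, empty_union, sub_self]
  · intro A B hAB hB
    rw [hh, hh]
    have hBU : B ∪ U ⊆ E ∪ Z := union_subset (hB.trans (sdiff_subset)) hUEZ
    exact sub_le_sub_right (hgmono (union_subset_union_left hAB) hBU) _
  · intro A B hA hB
    have hAU : A ∪ U ⊆ E ∪ Z := union_subset (hA.trans (sdiff_subset)) hUEZ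
    have hBU : B ∪ U ⊆ E ∪ Z := union_subset (hB.trans (sdiff_subset)) hUEZ
    have := hgsub hAU hBU
    have e1 : (A ∪ U) ∪ (B ∪ U) = (A ∪ B) ∪ U := by ext a; simp; tauto
    have e2 : (A ∪ U) ∩ (B ∪ U) = (A ∩ B) ∪ U := by ext a; simp; tauto
    rw [e1, e2] at this
    simp only [hh]
    linarith
  · intro S hS
    rw [hh, hext _ (union_subset (hS.trans sdiff_subset) hUE), hext _ hUE]
  · rw [hh, hh]
    have e1 : Z ∪ X ∪ U = Z ∪ (X ∪ U) := union_assoc _ _ _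
    rw [e1, hAK1]
  · intro X' hX'
    have := hAK2 (X' ∪ U) (union_subset_union_left hX')
    have e1 : X' ∪ U ∪ Z = X' ∪ Z ∪ U := by ext a; simp; tauto
    have e2 : X' ∪ U ∪ (Y ∪ U) = X' ∪ Y ∪ U := by ext a; simp; tauto
    have e3 : Z ∪ U = U ∪ Z := union_comm _ _
    rw [e1, e2] at this
    simp only [hh]
    rw [e3, hZU] at *
    linarith
end

section
/- Let f be a polymatroid on a finite set E containing a Vámos configuration, i.e., there are subsets L₀, L₁, L₂, L₃ ⊆ E with f(Lᵢ) = 2 for each i, f(Lᵢ ∪ Lⱼ) = 3 for every pair i < j except f(L₀ ∪ L₃) = 4, f(Lᵢ ∪ Lⱼ ∪ Lₖ) = 4 for every triple i < j < k, and f(L₀ ∪ L₁ ∪ L₂ ∪ L₃) = 4. Then for every nonempty finite set Z disjoint from E there is no polymatroid g on E ∪ Z that extends f and is an AK extension of f for the pair (L₁ ∪ L₂, L₀). -/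
open Finset

/-- The sets `L₀, L₁, L₂, L₃` form a Vámos configuration in the polymatroid `f`. -/
def IsVamosConfig {α : Type*} [DecidableEq α] (f : Finset α → ℝ)
    (L₀ L₁ L₂ L₃ : Finset α) : Prop :=
  f L₀ = 2 ∧ f L₁ = 2 ∧ f L₂ = 2 ∧ f L₃ = 2 ∧
  f (L₀ ∪ L₁) = 3 ∧ f (L₀ ∪ L₂) = 3 ∧ f (L₁ ∪ L₂) = 3 ∧
  f (L₁ ∪ L₃) = 3 ∧ f (L₂ ∪ L₃) = 3 ∧ f (L₀ ∪ L₃) = 4 ∧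
  f (L₀ ∪ L₁ ∪ L₂) = 4 ∧ f (L₀ ∪ L₁ ∪ L₃) = 4 ∧
  f (L₀ ∪ L₂ ∪ L₃) = 4 ∧ f (L₁ ∪ L₂ ∪ L₃) = 4 ∧
  f (L₀ ∪ L₁ ∪ L₂ ∪ L₃) = 4

/-- A polymatroid containing a Vámos configuration admits no AK extension
for the pair `(L₁ ∪ L₂, L₀)`. -/
theorem stmt_7 {α : Type*} [DecidableEq α] (E : Finset α) (f : Finset α → ℝ)
    (hf : IsPolymatroid E f)
    (L₀ L₁ L₂ L₃ : Finset α)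
    (hL₀ : L₀ ⊆ E) (hL₁ : L₁ ⊆ E) (hL₂ : L₂ ⊆ E) (hL₃ : L₃ ⊆ E)
    (hVamos : IsVamosConfig f L₀ L₁ L₂ L₃) :
    ∀ Z : Finset α, Z.Nonempty → Disjoint Z E →
      ¬ ∃ g : Finset α → ℝ, IsPolymatroid (E ∪ Z) g ∧ (∀ S ⊆ E, g S = f S) ∧
        IsAKExtension Z g (L₁ ∪ L₂) L₀ := by
  rintro Z hZne hdisj ⟨g, ⟨g0, gmono, gsub⟩, hgf, hAK1, hAK2⟩
  obtain ⟨v0, v1, v2, v3, v01, v02, v12, v13, v23, v03, v012, v013, v023, v123, v0123⟩ := hVamos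
  have hE0 : L₀ ⊆ E ∪ Z := hL₀.trans Finset.subset_union_left
  have hE1 : L₁ ⊆ E ∪ Z := hL₁.trans Finset.subset_union_left
  have hE2 : L₂ ⊆ E ∪ Z := hL₂.trans Finset.subset_union_left
  have hE3 : L₃ ⊆ E ∪ Z := hL₃.trans Finset.subset_union_left
  have hEZ : Z ⊆ E ∪ Z := Finset.subset_union_right
  -- g values on subsets of E
  have g0' : g L₀ = 2 := by rw [hgf _ hL₀]; exact v0
  have g1' : g L₁ = 2 := by rw [hgf _ hL₁]; exact v1
  have g2' : g L₂ = 2 := by rw [hgf _ hL₂]; exact v2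
  have g12 : g (L₁ ∪ L₂) = 3 := by rw [hgf _ (Finset.union_subset hL₁ hL₂)]; exact v12
  have g01 : g (L₀ ∪ L₁) = 3 := by rw [hgf _ (Finset.union_subset hL₀ hL₁)]; exact v01
  have g02 : g (L₀ ∪ L₂) = 3 := by rw [hgf _ (Finset.union_subset hL₀ hL₂)]; exact v02
  have g31 : g (L₃ ∪ L₁) = 3 := by
    rw [Finset.union_comm, hgf _ (Finset.union_subset hL₁ hL₃)]; exact v13
  have g32 : g (L₃ ∪ L₂) = 3 := by
    rw [Finset.union_comm, hgf _ (Finset.union_subset hL₂ hL₃)]; exact v23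
  have g03 : g (L₀ ∪ L₃) = 4 := by rw [hgf _ (Finset.union_subset hL₀ hL₃)]; exact v03
  have g012 : g (L₀ ∪ L₁ ∪ L₂) = 4 := by
    rw [hgf _ (Finset.union_subset (Finset.union_subset hL₀ hL₁) hL₂)]; exact v012
  have g312 : g (L₃ ∪ L₁ ∪ L₂) = 4 := by
    have h : L₃ ∪ L₁ ∪ L₂ = L₁ ∪ L₂ ∪ L₃ := by ext a; simp [Finset.mem_union]; tauto
    rw [h, hgf _ (Finset.union_subset (Finset.union_subset hL₁ hL₂) hL₃)]; exact v123
  -- determine g Z from the AK conditions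
  have hZ1 : g Z = 1 := by
    have h1 := hAK1
    have h2 := hAK2 (L₁ ∪ L₂) (Finset.Subset.refl _)
    have he : (L₁ ∪ L₂) ∪ L₀ = L₀ ∪ L₁ ∪ L₂ := by ext a; simp [Finset.mem_union]; tauto
    rw [Finset.union_comm] at h1
    rw [h1, he, g012, g12, g0'] at h2
    linarith
  -- g (L₁ ∪ Z) = 2, g (L₂ ∪ Z) = 2
  have gZ1 : g (L₁ ∪ Z) = 2 := by
    have h := hAK2 L₁ Finset.subset_union_left
    rw [hZ1, Finset.union_comm L₁ L₀] at h
    rw [g01, g0'] at h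
    linarith
  have gZ2 : g (L₂ ∪ Z) = 2 := by
    have h := hAK2 L₂ Finset.subset_union_right
    rw [hZ1, Finset.union_comm L₂ L₀] at h
    rw [g02, g0'] at h
    linarith
  -- key bound 1: g (A ∪ B ∪ Z) ≤ g (A ∪ B) + g (B ∪ Z) - g B
  have key1 : ∀ A B : Finset α, A ⊆ E → B ⊆ E →
      g (A ∪ B ∪ Z) ≤ g (A ∪ B) + g (B ∪ Z) - g B := by
    intro A B hA hB
    have hA' : A ⊆ E ∪ Z := hA.trans Finset.subset_union_left
    have hB' : B ⊆ E ∪ Z := hB.trans Finset.subset_union_left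
    have hs := gsub (X := A ∪ B) (Y := B ∪ Z) (Finset.union_subset hA' hB')
      (Finset.union_subset hB' hEZ)
    have m1 : g (A ∪ B ∪ Z) ≤ g ((A ∪ B) ∪ (B ∪ Z)) := by
      refine gmono ?_ (Finset.union_subset (Finset.union_subset hA' hB')
        (Finset.union_subset hB' hEZ))
      intro a ha; simp [Finset.mem_union] at ha ⊢; tauto
    have m2 : g B ≤ g ((A ∪ B) ∩ (B ∪ Z)) := by
      refine gmono (Finset.subset_inter Finset.subset_union_right Finset.subset_union_left)
        (Finset.inter_subset_left.trans (Finset.union_subset hA' hB'))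
    linarith
  -- key bound 2: g (A ∪ L₁ ∪ L₂) + g (A ∪ Z) ≤ g (A ∪ L₁ ∪ Z) + g (A ∪ L₂ ∪ Z)
  have key2 : ∀ A : Finset α, A ⊆ E →
      g (A ∪ L₁ ∪ L₂) + g (A ∪ Z) ≤ g (A ∪ L₁ ∪ Z) + g (A ∪ L₂ ∪ Z) := by
    intro A hA
    have hA' : A ⊆ E ∪ Z := hA.trans Finset.subset_union_left
    have hX : A ∪ L₁ ∪ Z ⊆ E ∪ Z := Finset.union_subset (Finset.union_subset hA' hE1) hEZ
    have hY : A ∪ L₂ ∪ Z ⊆ E ∪ Z := Finset.union_subset (Finset.union_subset hA' hE2) hEZ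
    have hs := gsub (X := A ∪ L₁ ∪ Z) (Y := A ∪ L₂ ∪ Z) hX hY
    have m1 : g (A ∪ L₁ ∪ L₂) ≤ g ((A ∪ L₁ ∪ Z) ∪ (A ∪ L₂ ∪ Z)) := by
      refine gmono ?_ (Finset.union_subset hX hY)
      intro a ha; simp [Finset.mem_union] at ha ⊢; tauto
    have m2 : g (A ∪ Z) ≤ g ((A ∪ L₁ ∪ Z) ∩ (A ∪ L₂ ∪ Z)) := by
      refine gmono ?_ (Finset.inter_subset_left.trans hX)
      refine Finset.subset_inter ?_ ?_ <;>
        (intro a ha; simp [Finset.mem_union] at ha ⊢; tauto)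
    linarith
  have b01 : g (L₀ ∪ L₁ ∪ Z) ≤ 3 := by have := key1 L₀ L₁ hL₀ hL₁; rw [g01, gZ1, g1'] at this; linarith
  have b02 : g (L₀ ∪ L₂ ∪ Z) ≤ 3 := by have := key1 L₀ L₂ hL₀ hL₂; rw [g02, gZ2, g2'] at this; linarith
  have b31 : g (L₃ ∪ L₁ ∪ Z) ≤ 3 := by have := key1 L₃ L₁ hL₃ hL₁; rw [g31, gZ1, g1'] at this; linarith
  have b32 : g (L₃ ∪ L₂ ∪ Z) ≤ 3 := by have := key1 L₃ L₂ hL₃ hL₂; rw [g32, gZ2, g2'] at this; linarith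
  have b0Z : g (L₀ ∪ Z) ≤ 2 := by have := key2 L₀ hL₀; rw [g012] at this; linarith
  have b3Z : g (L₃ ∪ Z) ≤ 2 := by have := key2 L₃ hL₃; rw [g312] at this; linarith
  -- final contradiction
  have hX : L₀ ∪ Z ⊆ E ∪ Z := Finset.union_subset hE0 hEZ
  have hY : L₃ ∪ Z ⊆ E ∪ Z := Finset.union_subset hE3 hEZ
  have hs := gsub (X := L₀ ∪ Z) (Y := L₃ ∪ Z) hX hY
  have m1 : g (L₀ ∪ L₃) ≤ g ((L₀ ∪ Z) ∪ (L₃ ∪ Z)) := by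
    refine gmono ?_ (Finset.union_subset hX hY)
    intro a ha; simp [Finset.mem_union] at ha ⊢; tauto
  have m2 : g Z ≤ g ((L₀ ∪ Z) ∩ (L₃ ∪ Z)) := by
    refine gmono (Finset.subset_inter Finset.subset_union_right Finset.subset_union_right)
      (Finset.inter_subset_left.trans hX)
  rw [g03] at m1
  rw [hZ1] at m2
  linarith
end

section
/- Let K be a field, V a finite-dimensional K-vector space, E a finite set, and (V_x)_{x∈E} a family of subspaces of V. For S ⊆ E let f(S) be the dimension of the subspace spanned by ⋃_{x∈S} V_x. Let X, Y ⊆ E, let z ∉ E, set V_z = (span of ⋃_{x∈X} V_x) ∩ (span of ⋃_{y∈Y} V_y), and for S ⊆ E ∪ {z} let g(S) be the dimension of the subspace spanned by ⋃_{x∈S} V_x. Then g is a polymatroid on E ∪ {z} extending f, and g is a CI extension of f for the pair (X, Y): g({z} ∪ X) = g(X), g({z} ∪ Y) = g(Y), and g(X ∪ {z}) + g(Y ∪ {z}) = g(X ∪ Y ∪ {z}) + g({z}). -/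
open Finset

/-- The class of `K`-linearly representable polymatroids satisfies the common
information property: adjoining a new element `z` representing the intersection
of the spans of `X` and of `Y` yields a linearly representable CI extension. -/
theorem stmt_9 {α : Type*} [DecidableEq α] (K W : Type*) [Field K] [AddCommGroup W]
    [Module K W] [FiniteDimensional K W]
    (E : Finset α) (Vs : α → Submodule K W)
    (X Y : Finset α) (hXE : X ⊆ E) (hYE : Y ⊆ E)
    (z : α) (hz : z ∉ E)
    (hVz : Vs z = (⨆ x ∈ X, Vs x) ⊓ (⨆ y ∈ Y, Vs y))
    (f g : Finset α → ℝ)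
    (hfdef : ∀ S : Finset α, S ⊆ E → f S = Module.finrank K ↥(⨆ x ∈ S, Vs x))
    (hgdef : ∀ S : Finset α, S ⊆ E ∪ {z} → g S = Module.finrank K ↥(⨆ x ∈ S, Vs x)) :
    IsPolymatroid (E ∪ {z}) g ∧ (∀ S ⊆ E, g S = f S) ∧ IsCIExtension {z} g X Y := by
  classical
  set F : Finset α → Submodule K W := fun S => ⨆ x ∈ S, Vs x with hF
  have hFmono : ∀ ⦃S T : Finset α⦄, S ⊆ T → F S ≤ F T := by
    intro S T hST
    exact biSup_mono (fun x hx => hST hx)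
  have hFunion : ∀ S T : Finset α, F (S ∪ T) = F S ⊔ F T := fun S T => Finset.iSup_union
  have hrk : ∀ S T : Finset α,
      (Module.finrank K (F S ⊔ F T : Submodule K W) : ℝ)
        + Module.finrank K (F S ⊓ F T : Submodule K W)
        = Module.finrank K (F S) + Module.finrank K (F T) := by
    intro S T
    exact_mod_cast Submodule.finrank_sup_add_finrank_inf_eq (F S) (F T)
  have hFz : F {z} = F X ⊓ F Y := by
    simp only [hF, Finset.iSup_singleton, hVz]
  have hXz : X ⊆ E ∪ {z} := hXE.trans Finset.subset_union_left
  have hYz : Y ⊆ E ∪ {z} := hYE.trans Finset.subset_union_left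
  have hzz : ({z} : Finset α) ⊆ E ∪ {z} := Finset.subset_union_right
  have hg : ∀ S : Finset α, S ⊆ E ∪ {z} → g S = Module.finrank K (F S) := hgdef
  refine ⟨⟨?_, ?_, ?_⟩, ?_, ?_, ?_, ?_⟩
  · rw [hg ∅ (Finset.empty_subset _)]
    simp [hF]
  · intro S T hST hTE
    rw [hg S (hST.trans hTE), hg T hTE]
    exact_mod_cast Submodule.finrank_mono (hFmono hST)
  · intro S T hSE hTE
    rw [hg S hSE, hg T hTE, hg (S ∪ T) (Finset.union_subset hSE hTE),
      hg (S ∩ T) ((Finset.inter_subset_left).trans hSE), hFunion]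
    have h1 : (Module.finrank K (F (S ∩ T)) : ℝ)
        ≤ Module.finrank K (F S ⊓ F T : Submodule K W) := by
      exact_mod_cast Submodule.finrank_mono
        (le_inf (hFmono Finset.inter_subset_left) (hFmono Finset.inter_subset_right))
    linarith [hrk S T]
  · intro S hSE
    rw [hg S (hSE.trans Finset.subset_union_left), hfdef S hSE]
  · rw [hg ({z} ∪ X) (Finset.union_subset hzz hXz), hg X hXz, hFunion, hFz,
      sup_eq_right.mpr inf_le_left]
  · rw [hg ({z} ∪ Y) (Finset.union_subset hzz hYz), hg Y hYz, hFunion, hFz,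
      sup_eq_right.mpr inf_le_right]
  · rw [hg (X ∪ {z}) (Finset.union_subset hXz hzz), hg (Y ∪ {z}) (Finset.union_subset hYz hzz),
      hg (X ∪ Y ∪ {z}) (Finset.union_subset (Finset.union_subset hXz hYz) hzz),
      hg {z} hzz, hFunion, hFunion, hFunion, hFunion, hFz,
      sup_eq_left.mpr inf_le_left, sup_eq_left.mpr inf_le_right]
    have h2 : F X ⊔ F Y ⊔ F X ⊓ F Y = F X ⊔ F Y :=
      sup_eq_left.mpr (inf_le_left.trans le_sup_left)
    rw [h2]
    linarith [hrk X Y]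
end

section
/- Let K be a field, V a K-vector space, E a finite set, and v : E → V a family of vectors; for S ⊆ E let f(S) denote the dimension of the span of {v(x) : x ∈ S}. Let F₁, F₂ ⊆ E be such that f(F₁ ∩ F₂) < f(F₁) + f(F₂) − f(F₁ ∪ F₂) (a non-modular pair). Then there exists a vector w ∈ V with w ∈ span{v(x) : x ∈ F₁} ∩ span{v(x) : x ∈ F₂} and w ∉ span{v(x) : x ∈ F₁ ∩ F₂}. (Adjoining w as a new element hence yields a generalized Euclidean extension of the K-linear matroid represented by v.) -/
open Finset

/-- For a linearly represented matroid and a non-modular pair `(F₁, F₂)`, there is a vector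
in the intersection of the spans of `F₁` and `F₂` that is not in the span of `F₁ ∩ F₂`;
adjoining it yields a generalized Euclidean extension. -/
theorem stmt_10 {α : Type*} [DecidableEq α] (K V : Type*) [Field K] [AddCommGroup V]
    [Module K V]
    (E : Finset α) (v : α → V) (F₁ F₂ : Finset α) (hF₁ : F₁ ⊆ E) (hF₂ : F₂ ⊆ E)
    (f : Finset α → ℝ)
    (hfdef : ∀ S : Finset α, f S = Module.finrank K ↥(Submodule.span K (v '' ↑S)))
    (hnonmod : f (F₁ ∩ F₂) < f F₁ + f F₂ - f (F₁ ∪ F₂)) :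
    ∃ w : V, w ∈ Submodule.span K (v '' ↑F₁) ∧ w ∈ Submodule.span K (v '' ↑F₂) ∧
      w ∉ Submodule.span K (v '' ↑(F₁ ∩ F₂)) := by
  set p₁ := Submodule.span K (v '' (↑F₁ : Set α))
  set p₂ := Submodule.span K (v '' (↑F₂ : Set α))
  have hfin₁ : FiniteDimensional K p₁ :=
    FiniteDimensional.span_of_finite K ((F₁.finite_toSet.image v))
  have hfin₂ : FiniteDimensional K p₂ :=
    FiniteDimensional.span_of_finite K ((F₂.finite_toSet.image v))
  have hsup : Submodule.span K (v '' (↑(F₁ ∪ F₂) : Set α)) = p₁ ⊔ p₂ := by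
    rw [coe_union, Set.image_union, Submodule.span_union]
  have hdim : Module.finrank K ↥(p₁ ⊔ p₂) + Module.finrank K ↥(p₁ ⊓ p₂)
      = Module.finrank K p₁ + Module.finrank K p₂ :=
    Submodule.finrank_sup_add_finrank_inf_eq p₁ p₂
  have hle : Submodule.span K (v '' (↑(F₁ ∩ F₂) : Set α)) ≤ p₁ ⊓ p₂ := by
    refine le_inf ?_ ?_ <;> apply Submodule.span_mono <;> apply Set.image_mono
    · exact fun x hx => (Finset.mem_inter.mp hx).1
    · exact fun x hx => (Finset.mem_inter.mp hx).2
  have hlt : Module.finrank K ↥(Submodule.span K (v '' (↑(F₁ ∩ F₂) : Set α)))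
      < Module.finrank K ↥(p₁ ⊓ p₂) := by
    rw [hfdef, hfdef, hfdef, hfdef, hsup] at hnonmod
    have : (Module.finrank K ↥(Submodule.span K (v '' (↑(F₁ ∩ F₂) : Set α))) : ℝ)
        < Module.finrank K ↥(p₁ ⊓ p₂) := by
      have hdimR : (Module.finrank K ↥(p₁ ⊔ p₂) : ℝ) + Module.finrank K ↥(p₁ ⊓ p₂)
          = Module.finrank K p₁ + Module.finrank K p₂ := by exact_mod_cast hdim
      linarith
    exact_mod_cast this
  have hfin₃ : FiniteDimensional K ↥(Submodule.span K (v '' (↑(F₁ ∩ F₂) : Set α))) :=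
    FiniteDimensional.span_of_finite K (((F₁ ∩ F₂).finite_toSet.image v))
  have hnotle : ¬ (p₁ ⊓ p₂ ≤ Submodule.span K (v '' (↑(F₁ ∩ F₂) : Set α))) := by
    intro h
    exact absurd (Submodule.finrank_mono h) (not_le.mpr hlt)
  obtain ⟨w, hw, hw'⟩ := SetLike.not_le_iff_exists.mp hnotle
  exact ⟨w, hw.1, hw.2, hw'⟩
end
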